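/- Every finite concept class C over a finite domain satisfies ANCTD(C) ≥ (1/2)·deg_avg(C), where deg_avg(C) is the average number of neighbors of a concept in C and ANCTD is the average no-clash teaching dimension. -/

import Mathlib

open Finset
open scoped symmDiff

variable {X : Type*} [DecidableEq X]

/-- A sample set `S` is consistent with concept `C`. -/
def Consistent (C : Finset X) (S : Finset (X × Bool)) : Prop :=
  ∀ p ∈ S, (p.1 ∈ C ↔ p.2 = true)

/-- `T` is a teacher mapping for the class `𝒞`. -/
def IsTeacher (𝒞 : Finset (Finset X)) (T : Finset X → Finset (X × Bool)) : Prop :=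
  ∀ C ∈ 𝒞, Consistent C (T C)

/-- `T` is non-clashing on `𝒞`. -/
def NonClashing (𝒞 : Finset (Finset X)) (T : Finset X → Finset (X × Bool)) : Prop :=
  ∀ C ∈ 𝒞, ∀ C' ∈ 𝒞, C ≠ C' → ¬ (Consistent C' (T C) ∧ Consistent C (T C'))

/-- The no-clash teaching dimension. -/
noncomputable def NCTD (𝒞 : Finset (Finset X)) : ℕ :=
  sInf {d | ∃ T : Finset X → Finset (X × Bool),
    IsTeacher 𝒞 T ∧ NonClashing 𝒞 T ∧ ∀ C ∈ 𝒞, (T C).card ≤ d}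

/-- `T` is a positive teacher mapping for `𝒞` (positive examples only). -/
def IsPosTeacher (𝒞 : Finset (Finset X)) (T : Finset X → Finset X) : Prop :=
  ∀ C ∈ 𝒞, T C ⊆ C

/-- A positive teacher mapping is non-clashing on `𝒞`. -/
def PosNonClashing (𝒞 : Finset (Finset X)) (T : Finset X → Finset X) : Prop :=
  ∀ C ∈ 𝒞, ∀ C' ∈ 𝒞, C ≠ C' → ¬ (T C ⊆ C' ∧ T C' ⊆ C)

/-- The positive no-clash teaching dimension. -/
noncomputable def NCTDplus (𝒞 : Finset (Finset X)) : ℕ :=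
  sInf {d | ∃ T : Finset X → Finset X,
    IsPosTeacher 𝒞 T ∧ PosNonClashing 𝒞 T ∧ ∀ C ∈ 𝒞, (T C).card ≤ d}

/-- The average no-clash teaching dimension (real-valued). -/
noncomputable def ANCTD (𝒞 : Finset (Finset X)) : ℝ :=
  sInf {q : ℝ | ∃ T : Finset X → Finset (X × Bool),
    IsTeacher 𝒞 T ∧ NonClashing 𝒞 T ∧
      q = (∑ C ∈ 𝒞, ((T C).card : ℝ)) / 𝒞.card}

/-- The number of neighbors of `C` in `𝒞` (concepts at symmetric difference one). -/
def degIn (𝒞 : Finset (Finset X)) (C : Finset X) : ℕ :=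
  (𝒞.filter (fun C' => ((C \ C') ∪ (C' \ C)).card = 1)).card

/-- The average degree of `𝒞`. -/
noncomputable def degAvg (𝒞 : Finset (Finset X)) : ℝ :=
  (∑ C ∈ 𝒞, (degIn 𝒞 C : ℝ)) / 𝒞.card

lemma covered_of_nonclash {𝒞 : Finset (Finset X)} {T : Finset X → Finset (X × Bool)}
    (hT : IsTeacher 𝒞 T) (hNC : NonClashing 𝒞 T) {C C' : Finset X}
    (hC : C ∈ 𝒞) (hC' : C' ∈ 𝒞) (hn : ((C \ C') ∪ (C' \ C)).card = 1) :
    (∃ p ∈ T C, p.1 ∈ (C \ C') ∪ (C' \ C)) ∨ (∃ p ∈ T C', p.1 ∈ (C \ C') ∪ (C' \ C)) := by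
  have hne : C ≠ C' := by
    rintro rfl
    simp at hn
  by_contra hcon
  push_neg at hcon
  obtain ⟨h1, h2⟩ := hcon
  refine hNC C hC C' hC' hne ⟨?_, ?_⟩
  · intro p hp
    have hiff : p.1 ∈ C ↔ p.1 ∈ C' := by
      have := h1 p hp
      simp only [mem_union, mem_sdiff] at this
      push_neg at this
      constructor
      · intro h; by_contra h'; exact absurd (this.1 h) (by simp [h'])
      · intro h; by_contra h'; exact absurd (this.2 h) (by simp [h'])
    exact hiff.symm.trans (hT C hC p hp)
  · intro p hp
    have hiff : p.1 ∈ C ↔ p.1 ∈ C' := by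
      have := h2 p hp
      simp only [mem_union, mem_sdiff] at this
      push_neg at this
      constructor
      · intro h; by_contra h'; exact absurd (this.1 h) (by simp [h'])
      · intro h; by_contra h'; exact absurd (this.2 h) (by simp [h'])
    exact hiff.trans (hT C' hC' p hp)

lemma sum_deg_le (𝒞 : Finset (Finset X)) (T : Finset X → Finset (X × Bool))
    (hT : IsTeacher 𝒞 T) (hNC : NonClashing 𝒞 T) :
    ∑ C ∈ 𝒞, degIn 𝒞 C ≤ 2 * ∑ C ∈ 𝒞, (T C).card := by
  classical
  set nbr : Finset X → Finset X → Prop := fun C C' => ((C \ C') ∪ (C' \ C)).card = 1 with hnbr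
  set cov : Finset X → Finset X → Prop := fun C C' => ∃ p ∈ T C, p.1 ∈ (C \ C') ∪ (C' \ C)
    with hcov
  -- per-concept covering bound
  have hAle : ∀ C ∈ 𝒞, (𝒞.filter (fun C' => nbr C C' ∧ cov C C')).card ≤ (T C).card := by
    intro C hC
    have : (𝒞.filter (fun C' => nbr C C' ∧ cov C C')).card ≤
        ((T C).image (fun p => ({p.1} : Finset X))).card := by
      apply Finset.card_le_card_of_injOn (fun C' => (C \ C') ∪ (C' \ C))
      · intro C' hC'
        simp only [mem_coe, mem_filter] at hC'
        obtain ⟨_, hn, p, hp, hpx⟩ := hC'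
        have h1 : (C \ C') ∪ (C' \ C) = {p.1} := by
          obtain ⟨a, ha⟩ := Finset.card_eq_one.mp hn
          rw [ha] at hpx ⊢
          simp at hpx
          simp [hpx]
        show (C \ C') ∪ (C' \ C) ∈ (T C).image (fun p => ({p.1} : Finset X))
        rw [h1]
        exact Finset.mem_image_of_mem _ hp
      · intro C1 h1 C2 h2 heq
        have e1 : C ∆ C1 = C ∆ C2 := by
          rw [symmDiff_def, symmDiff_def]
          exact heq
        exact symmDiff_right_injective C e1
    exact this.trans (Finset.card_image_le)
  -- split each degree
  have hsplit : ∀ C ∈ 𝒞, degIn 𝒞 C ≤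
      (𝒞.filter (fun C' => nbr C C' ∧ cov C C')).card +
      (𝒞.filter (fun C' => nbr C C' ∧ cov C' C)).card := by
    intro C hC
    have hsub : 𝒞.filter (fun C' => nbr C C') ⊆
        (𝒞.filter (fun C' => nbr C C' ∧ cov C C')) ∪
        (𝒞.filter (fun C' => nbr C C' ∧ cov C' C)) := by
      intro C' hmem
      simp only [mem_filter, mem_union] at hmem ⊢
      obtain ⟨hC'𝒞, hn⟩ := hmem
      rcases covered_of_nonclash hT hNC hC hC'𝒞 hn with h | h
      · exact Or.inl ⟨hC'𝒞, hn, h⟩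
      · obtain ⟨p, hp, hx⟩ := h
        exact Or.inr ⟨hC'𝒞, hn, p, hp, by rw [union_comm]; exact hx⟩
    calc degIn 𝒞 C = (𝒞.filter (fun C' => nbr C C')).card := rfl
      _ ≤ _ := (Finset.card_le_card hsub).trans (Finset.card_union_le _ _)
  -- symmetry of the second term
  have hswap : ∑ C ∈ 𝒞, (𝒞.filter (fun C' => nbr C C' ∧ cov C' C)).card =
      ∑ C ∈ 𝒞, (𝒞.filter (fun C' => nbr C C' ∧ cov C C')).card := by
    have lhs : ∀ C, (𝒞.filter (fun C' => nbr C C' ∧ cov C' C)).card =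
        ∑ C' ∈ 𝒞, if nbr C C' ∧ cov C' C then 1 else 0 := by
      intro C; rw [Finset.card_filter]
    have rhs : ∀ C, (𝒞.filter (fun C' => nbr C C' ∧ cov C C')).card =
        ∑ C' ∈ 𝒞, if nbr C C' ∧ cov C C' then 1 else 0 := by
      intro C; rw [Finset.card_filter]
    simp only [lhs, rhs]
    rw [Finset.sum_comm]
    refine Finset.sum_congr rfl fun A _ => Finset.sum_congr rfl fun B _ => ?_
    refine if_congr (and_congr_left fun _ => ?_) rfl rfl
    simp only [hnbr]
    rw [union_comm (B \ A) (A \ B)]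
  calc ∑ C ∈ 𝒞, degIn 𝒞 C
      ≤ ∑ C ∈ 𝒞, ((𝒞.filter (fun C' => nbr C C' ∧ cov C C')).card +
        (𝒞.filter (fun C' => nbr C C' ∧ cov C' C)).card) := Finset.sum_le_sum hsplit
    _ = ∑ C ∈ 𝒞, (𝒞.filter (fun C' => nbr C C' ∧ cov C C')).card +
        ∑ C ∈ 𝒞, (𝒞.filter (fun C' => nbr C C' ∧ cov C' C)).card := Finset.sum_add_distrib
    _ = 2 * ∑ C ∈ 𝒞, (𝒞.filter (fun C' => nbr C C' ∧ cov C C')).card := by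
        rw [hswap]; ring
    _ ≤ 2 * ∑ C ∈ 𝒞, (T C).card := by
        exact Nat.mul_le_mul_left 2 (Finset.sum_le_sum hAle)

/-- `ANCTD(𝒞) ≥ deg_avg(𝒞) / 2`. -/
theorem ANCTD_ge_half_degAvg {X : Type*} [DecidableEq X] [Fintype X]
    (𝒞 : Finset (Finset X)) (h𝒞 : 𝒞.Nonempty) :
    degAvg 𝒞 / 2 ≤ ANCTD 𝒞 := by
  classical
  apply le_csInf
  · refine ⟨(∑ C ∈ 𝒞, ((Finset.univ.image (fun x => (x, decide (x ∈ C))) : Finset (X × Bool)).card : ℝ)) / 𝒞.card,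
      fun C => Finset.univ.image (fun x => (x, decide (x ∈ C))), ?_, ?_, rfl⟩
    · intro C _ p hp
      simp only [Finset.mem_image, Finset.mem_univ, true_and] at hp
      obtain ⟨x, rfl⟩ := hp
      simp
    · intro C hC C' hC' hne hcl
      apply hne
      ext x
      have h1 := hcl.1 (x, decide (x ∈ C)) (by simp)
      simp only [decide_eq_true_eq] at h1
      exact h1.symm
  · rintro q ⟨T, hT, hNC, rfl⟩
    have key := sum_deg_le 𝒞 T hT hNC
    have hc0 : (0 : ℝ) < (𝒞.card : ℝ) := by
      exact_mod_cast Finset.card_pos.mpr h𝒞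
    rw [degAvg, div_div, div_le_div_iff₀ (by positivity) hc0]
    have hcast : (∑ C ∈ 𝒞, (degIn 𝒞 C : ℝ)) ≤ 2 * ∑ C ∈ 𝒞, ((T C).card : ℝ) := by
      have : ((∑ C ∈ 𝒞, degIn 𝒞 C : ℕ) : ℝ) ≤ ((2 * ∑ C ∈ 𝒞, (T C).card : ℕ) : ℝ) := by
        exact_mod_cast key
      push_cast at this
      exact this
    nlinarith [hc0.le]
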